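/- Let a be a nonzero polynomial in ℂ[X]. A bivariate polynomial c(∂,λ) ∈ ℂ[∂,λ] satisfies c(∂,λ)a(μ) + c(∂+λ,μ)a(λ) − c(∂,μ)a(λ) − c(∂+μ,λ)a(μ) = 0 for all ∂, λ, μ ∈ ℂ if and only if there exist polynomials φ₁, φ₂ ∈ ℂ[X] such that c(∂,λ) = a(λ)(φ₁(∂+λ) − φ₁(∂)) + φ₂(λ). -/

import Mathlib

open Polynomial

noncomputable def ev2 (c : MvPolynomial (Fin 2) ℂ) (x y : ℂ) : ℂ :=
  MvPolynomial.eval ![x, y] c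

namespace Stmt1Aux

noncomputable def E (p : Polynomial (Polynomial ℂ)) (x y : ℂ) : ℂ := (p.eval (C y)).eval x

lemma E_map (p : Polynomial (Polynomial ℂ)) (x y : ℂ) :
    E p x y = (p.map (evalRingHom x)).eval y := by
  induction p using Polynomial.induction_on' with
  | add p q hp hq =>
      simp only [E, eval_add, Polynomial.map_add] at hp hq ⊢; rw [hp, hq]
  | monomial n c => simp [E]

lemma ev2_eq (c : MvPolynomial (Fin 2) ℂ) (x y : ℂ) :
    ev2 c x y = E (MvPolynomial.aeval ![(C X : Polynomial (Polynomial ℂ)), (X : Polynomial (Polynomial ℂ))] c) x y := by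
  induction c using MvPolynomial.induction_on with
  | C a => simp [ev2, E]
  | add p q hp hq =>
      simp only [ev2, E, map_add, eval_add] at hp hq ⊢; rw [hp, hq]
  | mul_X p i hp =>
      have hX : E ((MvPolynomial.aeval (![C X, X] : Fin 2 → Polynomial (Polynomial ℂ))) (MvPolynomial.X i : MvPolynomial (Fin 2) ℂ)) x y
          = MvPolynomial.eval ![x, y] (MvPolynomial.X i : MvPolynomial (Fin 2) ℂ) := by
        fin_cases i <;> simp [E]
      simp only [ev2, E, map_mul, eval_mul] at hp hX ⊢
      rw [hp, hX]

lemma infinite_ne {a : Polynomial ℂ} (ha : a ≠ 0) : {z : ℂ | a.eval z ≠ 0}.Infinite := by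
  have h := Polynomial.finite_setOf_isRoot ha
  have he : {z : ℂ | a.eval z ≠ 0} = {z : ℂ | a.IsRoot z}ᶜ := by
    ext z; simp [Polynomial.IsRoot]
  rw [he]
  exact Set.Finite.infinite_compl h

lemma zero_of_cofinite {p a : Polynomial ℂ} (ha : a ≠ 0)
    (h : ∀ z, a.eval z ≠ 0 → p.eval z = 0) : p = 0 := by
  refine Polynomial.eq_zero_of_infinite_isRoot p ((infinite_ne ha).mono ?_)
  intro z hz; exact h z hz

lemma exists_antideriv (s : Polynomial ℂ) : ∃ R : Polynomial ℂ, derivative R = s := by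
  refine ⟨s.sum fun n c => C (c / (n + 1)) * X ^ (n + 1), ?_⟩
  rw [Polynomial.sum, map_sum]
  conv_rhs => rw [s.as_sum_support_C_mul_X_pow]
  refine Finset.sum_congr rfl fun n _ => ?_
  rw [derivative_C_mul_X_pow]
  congr 1
  have hn : ((n : ℂ) + 1) ≠ 0 := Nat.cast_add_one_ne_zero n
  congr 1
  push_cast
  exact div_mul_cancel₀ _ hn

lemma E_mapC (a' : Polynomial ℂ) (x y : ℂ) :
    E (a'.map (C : ℂ →+* Polynomial ℂ)) x y = a'.eval y := by
  unfold E
  rw [eval_map, Polynomial.eval₂_at_apply, eval_C]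

lemma map_mapC (a' : Polynomial ℂ) (x : ℂ) :
    (a'.map (C : ℂ →+* Polynomial ℂ)).map (evalRingHom x) = a' := by
  rw [Polynomial.map_map]
  have : (evalRingHom x).comp (C : ℂ →+* Polynomial ℂ) = RingHom.id ℂ := by
    ext z; simp
  rw [this, Polynomial.map_id]

end Stmt1Aux

open Stmt1Aux

theorem stmt_1 (a : Polynomial ℂ) (ha : a ≠ 0) (c : MvPolynomial (Fin 2) ℂ) :
    (∀ x l m : ℂ,
      ev2 c x l * a.eval m + ev2 c (x + l) m * a.eval l
        - ev2 c x m * a.eval l - ev2 c (x + m) l * a.eval m = 0) ↔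
    (∃ φ₁ φ₂ : Polynomial ℂ, ∀ x y : ℂ,
      ev2 c x y = a.eval y * (φ₁.eval (x + y) - φ₁.eval x) + φ₂.eval y) := by
  constructor
  · intro H
    set u := a.leadingCoeff with hu_def
    have hu : u ≠ 0 := leadingCoeff_ne_zero.mpr ha
    set ab : Polynomial ℂ := a * C u⁻¹ with hab_def
    have hmon : ab.Monic := monic_mul_leadingCoeff_inv ha
    have hab0 : ab ≠ 0 := hmon.ne_zero
    have habe : ∀ z, ab.eval z = a.eval z * u⁻¹ := by intro z; simp [hab_def]
    have hae : ∀ z, a.eval z = u * ab.eval z := by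
      intro z; rw [habe]; field_simp
    set b : Polynomial (Polynomial ℂ) :=
      MvPolynomial.aeval ![(C X : Polynomial (Polynomial ℂ)), X] c with hb_def
    have hb : ∀ x y, ev2 c x y = E b x y := fun x y => ev2_eq c x y
    set c0 : Polynomial ℂ := b.map (evalRingHom 0) with hc0_def
    have hc0 : ∀ y, c0.eval y = ev2 c 0 y := by
      intro y; rw [hb, E_map]
    set D : Polynomial (Polynomial ℂ) := b - c0.map C with hD_def
    have hED : ∀ x y, E D x y = ev2 c x y - ev2 c 0 y := by
      intro x y
      have h1 : E D x y = E b x y - E (c0.map C) x y := by simp [hD_def, E]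
      rw [h1, E_mapC, hb, hc0]
    have key : ∀ x y, a.eval x * E D x y = a.eval y * E D y x := by
      intro x y
      have h := H 0 y x
      rw [zero_add, zero_add] at h
      rw [hED, hED]
      linear_combination -h
    set abY : Polynomial (Polynomial ℂ) := ab.map (C : ℂ →+* Polynomial ℂ) with habY_def
    have hmonY : abY.Monic := hmon.map _
    set q : Polynomial (Polynomial ℂ) := D /ₘ abY with hq_def
    set r : Polynomial (Polynomial ℂ) := D %ₘ abY with hr_def
    have hdiv : r + abY * q = D := modByMonic_add_div D abY
    have hr0 : r = 0 := by
      ext j : 1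
      rw [coeff_zero]
      apply zero_of_cofinite ha
      intro x₀ hx
      have hmr : r.map (evalRingHom x₀) = 0 := by
        have hpoly : C (a.eval x₀) * D.map (evalRingHom x₀) = a * (D.eval (C x₀)) := by
          apply Polynomial.funext
          intro y
          rw [eval_mul, eval_mul, eval_C, ← E_map]
          have : (D.eval (C x₀)).eval y = E D y x₀ := rfl
          rw [this]
          exact key x₀ y
        have habdvda : ab ∣ a := by
          refine ⟨C u, ?_⟩
          rw [hab_def, mul_assoc, ← C_mul, inv_mul_cancel₀ hu, C_1, mul_one]
        have hdvd1 : ab ∣ C (a.eval x₀) * D.map (evalRingHom x₀) := by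
          rw [hpoly]; exact Dvd.dvd.mul_right habdvda _
        have hmapD : D.map (evalRingHom x₀)
            = r.map (evalRingHom x₀) + ab * q.map (evalRingHom x₀) := by
          conv_lhs => rw [← hdiv]
          rw [Polynomial.map_add, Polynomial.map_mul, habY_def, map_mapC]
        have hdvd2 : ab ∣ C (a.eval x₀) * r.map (evalRingHom x₀) := by
          have h2 : C (a.eval x₀) * D.map (evalRingHom x₀)
              - C (a.eval x₀) * (ab * q.map (evalRingHom x₀))
              = C (a.eval x₀) * r.map (evalRingHom x₀) := by
            rw [hmapD]; ring
          rw [← h2]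
          exact dvd_sub hdvd1 ((dvd_mul_right ab (q.map (evalRingHom x₀))).mul_left _)
        have hdvd3 : ab ∣ r.map (evalRingHom x₀) :=
          (isUnit_C.mpr (Ne.isUnit hx)).dvd_mul_left.mp hdvd2
        have hlt : (r.map (evalRingHom x₀)).degree < ab.degree := by
          calc (r.map (evalRingHom x₀)).degree ≤ r.degree := degree_map_le
            _ < abY.degree := degree_modByMonic_lt D hmonY
            _ = ab.degree := by
                rw [habY_def]
                exact degree_map_eq_of_injective Polynomial.C_injective ab
        exact Polynomial.eq_zero_of_dvd_of_degree_lt hdvd3 hlt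
      have := congrArg (fun p => Polynomial.coeff p j) hmr
      simpa [Polynomial.coeff_map] using this
    have hD_eq : D = abY * q := by rw [← hdiv, hr0, zero_add]
    have hQmul : ∀ x y, E D x y = ab.eval y * E q x y := by
      intro x y
      rw [hD_eq]
      have : E (abY * q) x y = E abY x y * E q x y := by simp [E]
      rw [this, habY_def, E_mapC]
    have hcrep : ∀ x y, ev2 c x y = ev2 c 0 y + ab.eval y * E q x y := by
      intro x y
      have h := hED x y
      rw [hQmul] at h
      linear_combination -h
    have hq00 : q.map (evalRingHom 0) = 0 := by
      apply zero_of_cofinite hab0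
      intro y hy
      have h0 : E D 0 y = 0 := by rw [hED]; ring
      rw [hQmul] at h0
      rw [← E_map]
      exact (mul_eq_zero.mp h0).resolve_left hy
    have hQ0 : ∀ y, E q 0 y = 0 := by
      intro y; rw [E_map, hq00, eval_zero]
    -- the cocycle polynomial in the third variable
    have hPev : ∀ x l m : ℂ,
        (C (E q x l) + q.map (evalRingHom (x+l)) - q.map (evalRingHom x)
          - (q.eval (C l)).comp (X + C x)).eval m
        = E q x l + E q (x+l) m - E q x m - E q (x+m) l := by
      intro x l m
      rw [eval_sub, eval_sub, eval_add, eval_C, eval_comp, eval_add, eval_X, eval_C,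
        ← E_map, ← E_map]
      have h1 : (q.eval (C l)).eval (m + x) = E q (x+m) l := by
        rw [add_comm m x]; rfl
      rw [h1]
    have hcoc1 : ∀ x l m, ab.eval l ≠ 0 → ab.eval m ≠ 0 →
        E q x l + E q (x+l) m - E q x m - E q (x+m) l = 0 := by
      intro x l m hl hm
      have h := H x l m
      rw [hcrep x l, hcrep (x+l) m, hcrep x m, hcrep (x+m) l, hae l, hae m] at h
      have h2 : (u * (ab.eval l * ab.eval m))
          * (E q x l + E q (x+l) m - E q x m - E q (x+m) l) = 0 := by
        linear_combination h
      exact (mul_eq_zero.mp h2).resolve_left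
        (mul_ne_zero hu (mul_ne_zero hl hm))
    have hcoc2 : ∀ x l, ab.eval l ≠ 0 →
        ∀ m, E q x l + E q (x+l) m - E q x m - E q (x+m) l = 0 := by
      intro x l hl m
      have hP0 : (C (E q x l) + q.map (evalRingHom (x+l)) - q.map (evalRingHom x)
          - (q.eval (C l)).comp (X + C x)) = 0 := by
        apply zero_of_cofinite hab0
        intro z hz
        rw [hPev]
        exact hcoc1 x l z hl hz
      rw [← hPev, hP0, eval_zero]
    have hcoc : ∀ x l m, E q x l + E q (x+l) m - E q x m - E q (x+m) l = 0 := by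
      intro x l m
      have hP'ev : ∀ z : ℂ,
          (q.map (evalRingHom x) + (q.eval (C m)).comp (X + C x) - C (E q x m)
            - q.map (evalRingHom (x+m))).eval z
          = E q x z + E q (x+z) m - E q x m - E q (x+m) z := by
        intro z
        rw [eval_sub, eval_sub, eval_add, eval_C, eval_comp, eval_add, eval_X, eval_C,
          ← E_map, ← E_map]
        have h1 : (q.eval (C m)).eval (z + x) = E q (x+z) m := by
          rw [add_comm z x]; rfl
        rw [h1]
      have hP'0 : (q.map (evalRingHom x) + (q.eval (C m)).comp (X + C x) - C (E q x m)
            - q.map (evalRingHom (x+m))) = 0 := by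
        apply zero_of_cofinite hab0
        intro z hz
        rw [hP'ev]
        exact hcoc2 x z hz m
      rw [← hP'ev, hP'0, eval_zero]
    have hPzero : ∀ x l : ℂ,
        (C (E q x l) + q.map (evalRingHom (x+l)) - q.map (evalRingHom x)
          - (q.eval (C l)).comp (X + C x)) = 0 := by
      intro x l
      apply Polynomial.funext
      intro m
      rw [hPev, eval_zero]
      exact hcoc x l m
    set s : Polynomial ℂ := (derivative q).eval (0 : Polynomial ℂ) with hs_def
    have hs : ∀ z, s.eval z = E (derivative q) z 0 := by
      intro z
      unfold E
      rw [map_zero (C : ℂ →+* Polynomial ℂ)]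
    have hder : ∀ x l : ℂ, (derivative (q.eval (C l))).eval x
        = s.eval (x+l) - s.eval x := by
      intro x l
      have h := congrArg derivative (hPzero x l)
      rw [derivative_zero, derivative_sub, derivative_sub, derivative_add,
        derivative_C, derivative_map, derivative_map, derivative_comp,
        derivative_add, derivative_X, derivative_C, add_zero, one_mul] at h
      have h2 := congrArg (Polynomial.eval (0 : ℂ)) h
      rw [eval_zero, eval_sub, eval_sub, eval_add, eval_zero, zero_add, eval_comp,
        eval_add, eval_X, eval_C, zero_add, ← E_map, ← E_map] at h2
      rw [← hs, ← hs] at h2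
      linear_combination -h2
    obtain ⟨R, hR⟩ := exists_antideriv s
    have hWl : ∀ l : ℂ, q.eval (C l)
        = R.comp (X + C l) - R - C (R.eval l - R.eval 0) := by
      intro l
      have hdW : derivative (q.eval (C l)
          - (R.comp (X + C l) - R - C (R.eval l - R.eval 0))) = 0 := by
        rw [derivative_sub, derivative_sub, derivative_sub, derivative_C,
          derivative_comp, derivative_add, derivative_X, derivative_C, add_zero,
          one_mul, hR, sub_zero]
        apply Polynomial.funext
        intro x
        rw [eval_zero, eval_sub, eval_sub, hder, eval_comp, eval_add, eval_X, eval_C]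
        ring
      have hdeg := natDegree_eq_zero_of_derivative_eq_zero hdW
      have hWC := eq_C_of_natDegree_eq_zero hdeg
      have hW0 : (q.eval (C l) - (R.comp (X + C l) - R - C (R.eval l - R.eval 0))).eval 0
          = 0 := by
        rw [eval_sub, eval_sub, eval_sub, eval_C, eval_comp, eval_add, eval_X, eval_C,
          zero_add]
        have : (q.eval (C l)).eval 0 = E q 0 l := rfl
        rw [this, hQ0]
        ring
      rw [hWC, eval_C] at hW0
      rw [hW0, C_0] at hWC
      exact sub_eq_zero.mp hWC
    refine ⟨C u⁻¹ * R, c0 - ab * (R - C (R.eval 0)), ?_⟩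
    intro x y
    rw [hcrep x y, ← hc0]
    have hq_xy : E q x y = R.eval (x+y) - R.eval x - R.eval y + R.eval 0 := by
      have h := congrArg (Polynomial.eval x) (hWl y)
      rw [eval_sub, eval_sub, eval_C, eval_comp, eval_add, eval_X, eval_C] at h
      have : (q.eval (C y)).eval x = E q x y := rfl
      rw [this] at h
      rw [h]; ring
    rw [hq_xy, habe y]
    have h2 : eval y (a * C u⁻¹) = eval y a * u⁻¹ := by rw [eval_mul, eval_C]
    simp only [eval_mul, eval_sub, eval_add, eval_C, habe, h2]
    ring
  · rintro ⟨φ₁, φ₂, hφ⟩ x l m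
    rw [hφ x l, hφ (x+l) m, hφ x m, hφ (x+m) l]
    ring
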